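/- Let a, b, k, m, p be positive real numbers, let n be a natural number, and for each natural number l set c_l = a^{2l} · 2^{k−1} · Γ(k+l) · Γ(m+l, b²/2) / ( l! · Γ(m+l) · (a²+2p)^{k+l} ). Then the truncation error of the series Σ_{l=0}^∞ c_l after n+1 terms satisfies the closed-form bound Σ_{l=n+1}^∞ c_l ≤ Γ(k)/(2 p^k) − Σ_{l=0}^n c_l. -/

import Mathlib

open MeasureTheory Real Filter

/-- Upper incomplete gamma function `Γ(s,x) = ∫_x^∞ t^(s-1) e^(-t) dt`. -/
noncomputable def uGamma (s x : ℝ) : ℝ := ∫ t in Set.Ioi x, t ^ (s - 1) * Real.exp (-t)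

/-- Generalized Marcum Q-function, defined by its canonical series
`Q_m(a,b) = Σ_{l=0}^∞ e^{-a²/2} (a²/2)^l / l! · Γ(m+l, b²/2)/Γ(m+l)`. -/
noncomputable def marcumQ (m a b : ℝ) : ℝ :=
  ∑' l : ℕ, Real.exp (-(a ^ 2) / 2) * (a ^ 2 / 2) ^ l / (Nat.factorial l) *
    (uGamma (m + l) (b ^ 2 / 2) / Real.Gamma (m + l))

/-- Pochhammer symbol `(x)_n = Γ(x+n)/Γ(x)`. -/
noncomputable def poch (x : ℝ) (n : ℕ) : ℝ := Real.Gamma (x + n) / Real.Gamma x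

/-- Kummer confluent hypergeometric function `₁F₁(α,β,z) = Σ_n (α)_n z^n / ((β)_n n!)`. -/
noncomputable def kummer (α β z : ℝ) : ℝ :=
  ∑' n : ℕ, poch α n * z ^ n / (poch β n * Nat.factorial n)

/-- Modified Bessel function of the first kind
`I_ν(z) = Σ_j (z/2)^(ν+2j) / (j! Γ(ν+j+1))`. -/
noncomputable def besselI (ν z : ℝ) : ℝ :=
  ∑' j : ℕ, (z / 2) ^ (ν + 2 * j) / (Nat.factorial j * Real.Gamma (ν + j + 1))

lemma uGamma_nonneg {s x : ℝ} (hx : 0 ≤ x) : 0 ≤ uGamma s x := by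
  apply setIntegral_nonneg measurableSet_Ioi
  intro t ht
  have ht0 : 0 ≤ t := hx.trans (le_of_lt ht)
  positivity

lemma uGamma_le_Gamma {s x : ℝ} (hs : 0 < s) (hx : 0 ≤ x) :
    uGamma s x ≤ Real.Gamma s := by
  rw [Real.Gamma_eq_integral hs, uGamma]
  have hint : IntegrableOn (fun t : ℝ => t ^ (s - 1) * Real.exp (-t)) (Set.Ioi 0) := by
    have := Real.GammaIntegral_convergent hs
    exact this.congr_fun (fun t ht => mul_comm _ _) measurableSet_Ioi
  calc (∫ t in Set.Ioi x, t ^ (s - 1) * Real.exp (-t))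
      ≤ ∫ t in Set.Ioi 0, t ^ (s - 1) * Real.exp (-t) := by
        apply setIntegral_mono_set hint
        · filter_upwards [self_mem_ae_restrict measurableSet_Ioi] with t ht
          have : (0:ℝ) ≤ t := le_of_lt ht
          positivity
        · exact HasSubset.Subset.eventuallyLE (Set.Ioi_subset_Ioi hx)
    _ = ∫ t in Set.Ioi 0, Real.exp (-t) * t ^ (s - 1) := by
        exact setIntegral_congr_fun measurableSet_Ioi (fun t _ => mul_comm _ _)

/-- Key partial-sum bound: `Σ_{l<N} x^l Γ(k+l)/(l! A^(k+l)) ≤ Γ(k)/(A-x)^k`. -/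
lemma key_bound {k A x : ℝ} (hk : 0 < k) (hx : 0 ≤ x) (hxA : x < A) (N : ℕ) :
    ∑ l ∈ Finset.range N, x ^ l * Real.Gamma (k + l) / (Nat.factorial l * A ^ (k + l)) ≤
      Real.Gamma k / (A - x) ^ k := by
  have hA : 0 < A := lt_of_le_of_lt hx hxA
  set r : ℝ := (A - x) / A with hr_def
  have hr : 0 < r := div_pos (by linarith) hA
  set g : ℕ → ℝ → ℝ := fun l t => (x / A) ^ l / (Nat.factorial l) / A ^ k *
    (Real.exp (-t) * t ^ (k + l - 1)) with hg_def
  have hgint : ∀ l : ℕ, IntegrableOn (g l) (Set.Ioi 0) := fun l => by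
    exact (Real.GammaIntegral_convergent (by positivity : (0:ℝ) < k + l)).const_mul _
  have hterm : ∀ l : ℕ, x ^ l * Real.Gamma (k + l) / (Nat.factorial l * A ^ (k + l)) =
      ∫ t in Set.Ioi 0, g l t := by
    intro l
    rw [MeasureTheory.integral_const_mul, ← Real.Gamma_eq_integral (by positivity : (0:ℝ) < k + l)]
    rw [Real.rpow_add hA, Real.rpow_natCast, div_pow]
    have h1 : (A:ℝ) ^ l ≠ 0 := by positivity
    have h2 : A ^ k ≠ 0 := by positivity
    have h3 : (Nat.factorial l : ℝ) ≠ 0 := by positivity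
    field_simp
    try ring
    try exact Or.inl trivial
  -- the dominating integrable function
  set F : ℝ → ℝ := fun t => (1 / A ^ k) * (t ^ (k - 1) * Real.exp (-(r * t))) with hF_def
  have hFint : IntegrableOn F (Set.Ioi 0) := by
    apply Integrable.const_mul
    have := integrableOn_rpow_mul_exp_neg_mul_rpow (p := 1) (s := k - 1) (b := r)
      (by linarith) one_pos hr
    exact this.congr_fun (fun t ht => by beta_reduce; rw [Real.rpow_one, neg_mul]) measurableSet_Ioi
  have hsum_le : ∑ l ∈ Finset.range N, x ^ l * Real.Gamma (k + l) /
      (Nat.factorial l * A ^ (k + l)) ≤ ∫ t in Set.Ioi 0, F t := by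
    calc ∑ l ∈ Finset.range N, x ^ l * Real.Gamma (k + l) / (Nat.factorial l * A ^ (k + l))
        = ∫ t in Set.Ioi 0, ∑ l ∈ Finset.range N, g l t := by
          rw [MeasureTheory.integral_finset_sum _ (fun l _ => hgint l)]
          exact Finset.sum_congr rfl fun l _ => hterm l
      _ ≤ ∫ t in Set.Ioi 0, F t := by
          apply setIntegral_mono_on
            (MeasureTheory.integrable_finset_sum _ (fun l _ => hgint l)) hFint
            measurableSet_Ioi
          intro t ht
          have ht0 : (0:ℝ) < t := ht
          have hrw : ∀ l : ℕ, g l t =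
              Real.exp (-t) * t ^ (k - 1) / A ^ k * ((x / A * t) ^ l / Nat.factorial l) := by
            intro l
            simp only [hg_def]
            rw [show k + (l:ℝ) - 1 = (k - 1) + l by ring, Real.rpow_add ht0,
              Real.rpow_natCast, mul_pow, div_pow]
            field_simp
          rw [Finset.sum_congr rfl fun l _ => hrw l, ← Finset.mul_sum]
          have hexp : ∑ l ∈ Finset.range N, (x / A * t) ^ l / Nat.factorial l ≤
              Real.exp (x / A * t) := Real.sum_le_exp_of_nonneg (by positivity) N
          have hpos : 0 ≤ Real.exp (-t) * t ^ (k - 1) / A ^ k := by positivity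
          calc Real.exp (-t) * t ^ (k - 1) / A ^ k *
                ∑ l ∈ Finset.range N, (x / A * t) ^ l / Nat.factorial l
              ≤ Real.exp (-t) * t ^ (k - 1) / A ^ k * Real.exp (x / A * t) :=
                mul_le_mul_of_nonneg_left hexp hpos
            _ = F t := by
                simp only [hF_def]
                have hE : Real.exp (-t) * Real.exp (x / A * t) = Real.exp (-(r * t)) := by
                  rw [← Real.exp_add]
                  congr 1
                  rw [hr_def]
                  field_simp
                  ring
                rw [← hE]
                ring
  have hFval : ∫ t in Set.Ioi 0, F t = Real.Gamma k / (A - x) ^ k := by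
    rw [hF_def, MeasureTheory.integral_const_mul,
      Real.integral_rpow_mul_exp_neg_mul_Ioi hk hr]
    have h1 : (1 / r : ℝ) = A / (A - x) := by
      rw [hr_def]; field_simp
    rw [h1, Real.div_rpow hA.le (by linarith : (0:ℝ) ≤ A - x)]
    have h2 : (0:ℝ) < A ^ k := Real.rpow_pos_of_pos hA k
    have h3 : (0:ℝ) < (A - x) ^ k := Real.rpow_pos_of_pos (by linarith) k
    field_simp
    try ring
  rw [← hFval]
  exact hsum_le

/-- closed-form upper bound on the truncation error of the series
`Σ c_l` after `n+1` terms: `Σ_{l=n+1}^∞ c_l ≤ Γ(k)/(2 p^k) − Σ_{l=0}^n c_l`. -/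
theorem truncation_error_bound (a b k m p : ℝ) (n : ℕ)
    (ha : 0 < a) (hb : 0 < b) (hk : 0 < k) (hm : 0 < m) (hp : 0 < p)
    (c : ℕ → ℝ)
    (hc : ∀ l : ℕ, c l =
      a ^ (2 * l) * 2 ^ (k - 1) * Real.Gamma (k + l) * uGamma (m + l) (b ^ 2 / 2) /
        (Nat.factorial l * Real.Gamma (m + l) * (a ^ 2 + 2 * p) ^ (k + l))) :
    (∑' l : ℕ, c (l + n + 1)) ≤
      Real.Gamma k / (2 * p ^ k) - ∑ l ∈ Finset.range (n + 1), c l := by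
  set A : ℝ := a ^ 2 + 2 * p with hA_def
  set x : ℝ := a ^ 2 with hx_def
  have hA : (0:ℝ) < A := by positivity
  have hx : (0:ℝ) ≤ x := by positivity
  have hxA : x < A := by simp only [hA_def, hx_def]; linarith
  set d : ℕ → ℝ := fun l => 2 ^ (k - 1) *
    (x ^ l * Real.Gamma (k + l) / (Nat.factorial l * A ^ (k + l))) with hd_def
  have hcd : ∀ l, c l ≤ d l := by
    intro l
    have hG : (0:ℝ) < Real.Gamma (m + l) := Real.Gamma_pos_of_pos (by positivity)
    have hu : uGamma (m + l) (b ^ 2 / 2) ≤ Real.Gamma (m + l) :=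
      uGamma_le_Gamma (by positivity) (by positivity)
    have hrepr : c l = d l * (uGamma (m + l) (b ^ 2 / 2) / Real.Gamma (m + l)) := by
      rw [hc l, hd_def]
      have h1 : a ^ (2 * l) = x ^ l := by rw [hx_def, pow_mul]
      have h2 : (Nat.factorial l : ℝ) ≠ 0 := by positivity
      have h3 : A ^ (k + (l:ℝ)) ≠ 0 := by positivity
      rw [h1]
      field_simp
    rw [hrepr]
    have hd0 : 0 ≤ d l := by
      have := Real.Gamma_pos_of_pos (show (0:ℝ) < k + l by positivity)
      rw [hd_def]
      positivity
    calc d l * (uGamma (m + l) (b ^ 2 / 2) / Real.Gamma (m + l)) ≤ d l * 1 := by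
          apply mul_le_mul_of_nonneg_left _ hd0
          rw [div_le_one hG]; exact hu
      _ = d l := mul_one _
  have hc0 : ∀ l, 0 ≤ c l := by
    intro l
    rw [hc l]
    have hu0 : 0 ≤ uGamma (m + l) (b ^ 2 / 2) := uGamma_nonneg (by positivity)
    have hG : (0:ℝ) < Real.Gamma (m + l) := Real.Gamma_pos_of_pos (by positivity)
    have hG2 : (0:ℝ) < Real.Gamma (k + l) := Real.Gamma_pos_of_pos (by positivity)
    positivity
  -- bound on partial sums
  have hB : ∀ N, ∑ l ∈ Finset.range N, c l ≤ Real.Gamma k / (2 * p ^ k) := by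
    intro N
    have h1 : ∑ l ∈ Finset.range N, c l ≤ ∑ l ∈ Finset.range N, d l :=
      Finset.sum_le_sum fun l _ => hcd l
    have h2 : ∑ l ∈ Finset.range N, d l ≤ 2 ^ (k - 1) * (Real.Gamma k / (A - x) ^ k) := by
      rw [hd_def, ← Finset.mul_sum]
      exact mul_le_mul_of_nonneg_left (key_bound hk hx hxA N) (by positivity)
    have h3 : 2 ^ (k - 1) * (Real.Gamma k / (A - x) ^ k) = Real.Gamma k / (2 * p ^ k) := by
      have hAx : A - x = 2 * p := by simp only [hA_def, hx_def]; ring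
      rw [hAx, Real.mul_rpow (by norm_num) hp.le,
        Real.rpow_sub (by norm_num : (0:ℝ) < 2), Real.rpow_one]
      have hpk : (0:ℝ) < p ^ k := Real.rpow_pos_of_pos hp k
      have h2k : (0:ℝ) < (2:ℝ) ^ k := Real.rpow_pos_of_pos (by norm_num) k
      field_simp
    linarith
  have hsum : Summable c := summable_of_sum_range_le hc0 hB
  have htsum : ∑' l, c l ≤ Real.Gamma k / (2 * p ^ k) := Summable.tsum_le_of_sum_range_le hsum hB
  have hsplit : ∑ l ∈ Finset.range (n + 1), c l + ∑' l, c (l + (n + 1)) = ∑' l, c l :=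
    Summable.sum_add_tsum_nat_add (n + 1) hsum
  have : (∑' l : ℕ, c (l + n + 1)) = ∑' l, c (l + (n + 1)) := rfl
  linarith [this ▸ (by linarith [hsplit] : (∑' l, c (l + (n + 1))) ≤
    Real.Gamma k / (2 * p ^ k) - ∑ l ∈ Finset.range (n + 1), c l)]
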